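/- For any integer 1 ≤ d₀ ≤ n and all y > 0, the conditional CDF F(y;θ | D ≥ d₀) of the MLE under type-I censoring tends to 1 as θ ↓ 0. -/

import Mathlib

open Filter Set

/-- CDF of the gamma distribution with integer shape `d ≥ 1` and scale 1
(equal to 0 for x ≤ 0). -/
noncomputable def gammaCDF (x : ℝ) (d : ℕ) : ℝ :=
  (∫ u in (0:ℝ)..(max x 0), u ^ (d - 1) * Real.exp (-u)) / (Nat.factorial (d - 1))

/-- P_θ(D ≥ d₀) where D ~ Binomial(n, 1 − e^{−T/θ}). -/
noncomputable def probDge (n d0 : ℕ) (T θ : ℝ) : ℝ :=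
  ∑ j ∈ Finset.Icc d0 n,
    (n.choose j : ℝ) * (1 - Real.exp (-T / θ)) ^ j * Real.exp (-((n:ℝ) - j) * T / θ)

/-- The conditional CDF F(y;θ | D ≥ d₀) of the MLE of the exponential mean under
type-I censoring at time T with n items (Bartholomew's formula). -/
noncomputable def condCDF_MLE (n d0 : ℕ) (T y θ : ℝ) : ℝ :=
  (∑ d ∈ Finset.Icc d0 n, ∑ ν ∈ Finset.range (d + 1),
      (-1:ℝ) ^ ν * (n.choose d) * (d.choose ν) * Real.exp (-(((n:ℝ) - d + ν)) * T / θ) *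
        gammaCDF ((d * y - ((n:ℝ) - d + ν) * T) / θ) d) / probDge n d0 T θ

section Aux

open MeasureTheory

lemma gamma_integrand_int (d : ℕ) (hd : 1 ≤ d) :
    IntegrableOn (fun u : ℝ => u ^ (d - 1) * Real.exp (-u)) (Ioi 0) := by
  have h := Real.GammaIntegral_convergent (s := (d : ℝ)) (by exact_mod_cast hd)
  refine h.congr_fun ?_ measurableSet_Ioi
  intro x hx
  have : ((d : ℝ) - 1) = ((d - 1 : ℕ) : ℝ) := by
    rw [Nat.cast_sub hd]; simp
  simp only [this, Real.rpow_natCast]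
  ring

lemma gamma_integral_eq (d : ℕ) (hd : 1 ≤ d) :
    ∫ u in Ioi (0:ℝ), u ^ (d - 1) * Real.exp (-u) = (Nat.factorial (d - 1) : ℝ) := by
  have h1 : Real.Gamma (d : ℝ) = ∫ x in Ioi (0:ℝ), Real.exp (-x) * x ^ ((d:ℝ) - 1) :=
    Real.Gamma_eq_integral (by exact_mod_cast hd)
  have h2 : Real.Gamma (d : ℝ) = (Nat.factorial (d - 1) : ℝ) := by
    have : ((d - 1 : ℕ) : ℝ) + 1 = (d : ℝ) := by
      rw [Nat.cast_sub hd]; simp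
    rw [← this, Real.Gamma_nat_eq_factorial]
  rw [← h2, h1]
  refine setIntegral_congr_fun measurableSet_Ioi fun x hx => ?_
  have : ((d : ℝ) - 1) = ((d - 1 : ℕ) : ℝ) := by rw [Nat.cast_sub hd]; simp
  rw [this, Real.rpow_natCast]; ring

lemma gammaCDF_nonneg (x : ℝ) (d : ℕ) : 0 ≤ gammaCDF x d := by
  unfold gammaCDF
  apply div_nonneg _ (by positivity)
  apply intervalIntegral.integral_nonneg (le_max_right x 0)
  intro u hu
  exact mul_nonneg (pow_nonneg hu.1 _) (Real.exp_nonneg (-u))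

lemma gammaCDF_le_one (x : ℝ) (d : ℕ) (hd : 1 ≤ d) : gammaCDF x d ≤ 1 := by
  unfold gammaCDF
  rw [div_le_one (by positivity)]
  rw [← gamma_integral_eq d hd]
  rw [intervalIntegral.integral_of_le (le_max_right x 0)]
  apply setIntegral_mono_set (gamma_integrand_int d hd)
  · exact (MeasureTheory.ae_restrict_iff' measurableSet_Ioi).mpr (MeasureTheory.ae_of_all _
      fun u hu => mul_nonneg (pow_nonneg (le_of_lt hu) _) (Real.exp_nonneg (-u)))
  · exact HasSubset.Subset.eventuallyLE Ioc_subset_Ioi_self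

lemma tendsto_gammaCDF (d : ℕ) (hd : 1 ≤ d) :
    Tendsto (fun x => gammaCDF x d) atTop (nhds 1) := by
  have h := MeasureTheory.intervalIntegral_tendsto_integral_Ioi 0 (gamma_integrand_int d hd)
    (tendsto_id (α := ℝ))
  rw [gamma_integral_eq d hd] at h
  have hfac : (0:ℝ) < (Nat.factorial (d-1) : ℝ) := by positivity
  have h2 : Tendsto (fun x : ℝ =>
      (∫ u in (0:ℝ)..x, u ^ (d - 1) * Real.exp (-u)) / (Nat.factorial (d - 1)))
      atTop (nhds 1) := by
    have := h.div_const (Nat.factorial (d-1) : ℝ)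
    simpa [div_self hfac.ne'] using this
  refine h2.congr' ?_
  filter_upwards [eventually_ge_atTop (0:ℝ)] with x hx
  unfold gammaCDF
  rw [max_eq_left hx]

lemma tendsto_exp_neg (T : ℝ) (hT : 0 < T) (c : ℝ) (hc : 0 < c) :
    Tendsto (fun θ : ℝ => Real.exp (-c * T / θ)) (nhdsWithin 0 (Set.Ioi 0)) (nhds 0) := by
  have h1 : Tendsto (fun θ : ℝ => c * T * θ⁻¹) (nhdsWithin 0 (Set.Ioi 0)) atTop :=
    tendsto_inv_nhdsGT_zero.const_mul_atTop (mul_pos hc hT)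
  have h2 := (Real.tendsto_exp_atTop.comp h1).inv_tendsto_atTop
  refine h2.congr fun θ => ?_
  simp [Real.exp_neg, neg_div, neg_mul, div_eq_mul_inv, Function.comp]

lemma term_tendsto_zero (n : ℕ) (T y : ℝ) (hT : 0 < T) (d ν : ℕ) (hd1 : 1 ≤ d)
    (hc : 0 < (n:ℝ) - d + ν) :
    Tendsto (fun θ : ℝ => (-1:ℝ) ^ ν * (n.choose d) * (d.choose ν) *
        Real.exp (-(((n:ℝ) - d + ν)) * T / θ) *
        gammaCDF ((d * y - ((n:ℝ) - d + ν) * T) / θ) d)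
      (nhdsWithin 0 (Set.Ioi 0)) (nhds 0) := by
  set c := (n:ℝ) - d + ν with hcdef
  refine squeeze_zero_norm
    (a := fun θ => (n.choose d : ℝ) * (d.choose ν) * Real.exp (-c * T / θ)) ?_ ?_
  · intro θ
    rw [Real.norm_eq_abs]
    have h1 : |(-1:ℝ) ^ ν * (n.choose d) * (d.choose ν) * Real.exp (-c * T / θ) *
        gammaCDF ((d * y - c * T) / θ) d|
        ≤ (n.choose d : ℝ) * (d.choose ν) * Real.exp (-c * T / θ) * 1 := by
      rw [abs_mul, abs_mul, abs_mul, abs_mul, abs_pow, abs_neg, abs_one, one_pow, one_mul,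
          Nat.abs_cast, Nat.abs_cast, Real.abs_exp, abs_of_nonneg (gammaCDF_nonneg _ _)]
      exact mul_le_mul_of_nonneg_left (gammaCDF_le_one _ _ hd1) (by positivity)
    simpa using h1
  · have := (tendsto_const_nhds
        (x := (n.choose d : ℝ) * (d.choose ν)) (f := nhdsWithin (0:ℝ) (Set.Ioi 0))).mul
      (tendsto_exp_neg T hT c hc)
    simpa [mul_assoc] using this

end Aux

/-- For 1 ≤ d₀ ≤ n and all y > 0, F(y;θ | D ≥ d₀) → 1 as θ ↓ 0. -/
theorem condCDF_MLE_tendsto_one (n d0 : ℕ) (h1 : 1 ≤ d0) (h2 : d0 ≤ n)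
    (T : ℝ) (hT : 0 < T) (y : ℝ) (hy : 0 < y) :
    Tendsto (fun θ : ℝ => condCDF_MLE n d0 T y θ) (nhdsWithin 0 (Set.Ioi 0)) (nhds 1) := by
  have hn1 : 1 ≤ n := le_trans h1 h2
  set L := nhdsWithin (0:ℝ) (Set.Ioi 0) with hL
  have hexp1 : Tendsto (fun θ : ℝ => Real.exp (-T / θ)) L (nhds 0) := by
    have := tendsto_exp_neg T hT 1 one_pos
    simpa using this
  -- denominator
  have hden : Tendsto (fun θ : ℝ => probDge n d0 T θ) L (nhds 1) := by
    have key : Tendsto (fun θ : ℝ => probDge n d0 T θ) L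
        (nhds (∑ j ∈ Finset.Icc d0 n, if j = n then (1:ℝ) else 0)) := by
      unfold probDge
      refine tendsto_finset_sum _ fun j hj => ?_
      have hpow : Tendsto (fun θ : ℝ => (1 - Real.exp (-T / θ)) ^ j) L (nhds 1) := by
        have := (tendsto_const_nhds (x := (1:ℝ)) (f := L)).sub hexp1
        simpa using this.pow j
      rcases eq_or_ne j n with rfl | hjn
      · simp only [if_pos rfl]
        have : Tendsto (fun θ : ℝ => ((j.choose j : ℝ)) * (1 - Real.exp (-T / θ)) ^ j) L
            (nhds 1) := by
          simpa [Nat.choose_self] using (tendsto_const_nhds (x := (j.choose j : ℝ))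
            (f := L)).mul hpow
        simpa using this
      · simp only [if_neg hjn]
        have hjn' : j < n := lt_of_le_of_ne (Finset.mem_Icc.mp hj).2 hjn
        have hc : (0:ℝ) < (n:ℝ) - j := by
          have : (j:ℝ) < n := by exact_mod_cast hjn'
          linarith
        have he0 := tendsto_exp_neg T hT _ hc
        have := ((tendsto_const_nhds (x := (n.choose j : ℝ)) (f := L)).mul hpow).mul he0
        simpa using this
    have hsum : (∑ j ∈ Finset.Icc d0 n, if j = n then (1:ℝ) else 0) = 1 := by
      rw [Finset.sum_ite_eq' (Finset.Icc d0 n) n (fun _ => (1:ℝ))]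
      simp [Finset.mem_Icc, h2]
    rwa [hsum] at key
  -- numerator
  have hnum : Tendsto (fun θ : ℝ => ∑ d ∈ Finset.Icc d0 n, ∑ ν ∈ Finset.range (d + 1),
      (-1:ℝ) ^ ν * (n.choose d) * (d.choose ν) * Real.exp (-(((n:ℝ) - d + ν)) * T / θ) *
        gammaCDF ((d * y - ((n:ℝ) - d + ν) * T) / θ) d) L (nhds 1) := by
    have key : Tendsto (fun θ : ℝ => ∑ d ∈ Finset.Icc d0 n, ∑ ν ∈ Finset.range (d + 1),
        (-1:ℝ) ^ ν * (n.choose d) * (d.choose ν) * Real.exp (-(((n:ℝ) - d + ν)) * T / θ) *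
          gammaCDF ((d * y - ((n:ℝ) - d + ν) * T) / θ) d) L
        (nhds (∑ d ∈ Finset.Icc d0 n, if d = n then (1:ℝ) else 0)) := by
      refine tendsto_finset_sum _ fun d hd => ?_
      have hd1 : 1 ≤ d := le_trans h1 (Finset.mem_Icc.mp hd).1
      have hdn : d ≤ n := (Finset.mem_Icc.mp hd).2
      rcases eq_or_ne d n with h | hdn'
      · -- d = n case
        rw [if_pos h, ← h]
        have key2 : Tendsto (fun θ : ℝ => ∑ ν ∈ Finset.range (d + 1),
            (-1:ℝ) ^ ν * (d.choose d) * (d.choose ν) *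
              Real.exp (-(((d:ℝ) - d + ν)) * T / θ) *
              gammaCDF ((d * y - ((d:ℝ) - d + ν) * T) / θ) d) L
            (nhds (∑ ν ∈ Finset.range (d + 1), if ν = 0 then (1:ℝ) else 0)) := by
          refine tendsto_finset_sum _ fun ν hν => ?_
          rcases eq_or_ne ν 0 with rfl | hν0
          · rw [if_pos rfl]
            have harg : Tendsto (fun θ : ℝ => (d:ℝ) * y / θ) L atTop := by
              have hdy : (0:ℝ) < (d:ℝ) * y := by
                have : (0:ℝ) < (d:ℝ) := by exact_mod_cast lt_of_lt_of_le one_pos hd1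
                exact mul_pos this hy
              have := tendsto_inv_nhdsGT_zero.const_mul_atTop hdy
              simpa [div_eq_mul_inv] using this
            have hg := (tendsto_gammaCDF d hd1).comp harg
            refine hg.congr fun θ => ?_
            simp [Function.comp, sub_self]
          · rw [if_neg hν0]
            have hc : (0:ℝ) < (d:ℝ) - d + ν := by
              have : (0:ℝ) < (ν:ℝ) := by
                exact_mod_cast Nat.pos_of_ne_zero hν0
              simp only [sub_self, zero_add]
              exact this
            exact term_tendsto_zero d T y hT d ν hd1 hc
        have hsum2 : (∑ ν ∈ Finset.range (d + 1), if ν = 0 then (1:ℝ) else 0) = 1 := by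
          rw [Finset.sum_ite_eq' (Finset.range (d + 1)) 0 (fun _ => (1:ℝ))]
          simp
        rwa [hsum2] at key2
      · -- d < n case
        rw [if_neg hdn']
        have hdn2 : d < n := lt_of_le_of_ne hdn hdn'
        have hz : Tendsto (fun θ : ℝ => ∑ ν ∈ Finset.range (d + 1),
            (-1:ℝ) ^ ν * (n.choose d) * (d.choose ν) *
              Real.exp (-(((n:ℝ) - d + ν)) * T / θ) *
              gammaCDF ((d * y - ((n:ℝ) - d + ν) * T) / θ) d) L
            (nhds (∑ ν ∈ Finset.range (d + 1), (0:ℝ))) := by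
          refine tendsto_finset_sum _ fun ν hν => ?_
          have hc : (0:ℝ) < (n:ℝ) - d + ν := by
            have hlt : (d:ℝ) < n := by exact_mod_cast hdn2
            have h' : (0:ℝ) ≤ (ν:ℝ) := Nat.cast_nonneg ν
            linarith
          exact term_tendsto_zero n T y hT d ν hd1 hc
        simpa using hz
    have hsum : (∑ d ∈ Finset.Icc d0 n, if d = n then (1:ℝ) else 0) = 1 := by
      rw [Finset.sum_ite_eq' (Finset.Icc d0 n) n (fun _ => (1:ℝ))]
      simp [Finset.mem_Icc, h2]
    rwa [hsum] at key
  have := hnum.div hden one_ne_zero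
  simpa [condCDF_MLE, Pi.div_def] using this
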